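/- There exists a subshift X ⊂ Σ^ℤ (over a suitable finite alphabet) whose Besicovitch projection X̃ = { y : d_B(y, X) = 0 } is not closed in the Besicovitch topology: there is a point y with d_B(y, X̃) = 0 but y ∉ X̃. -/

import Mathlib

open Filter

/-- Hamming distance between `x` and `y` on the coordinate interval `[a, b]`. -/
noncomputable def hamIcc {A : Type*} (x y : ℤ → A) (a b : ℤ) : ℕ :=
  @Finset.card ℤ (@Finset.filter ℤ (fun i => x i ≠ y i) (Classical.decPred _) (Finset.Icc a b))

/-- The Besicovitch pseudodistance on `A^ℤ`. -/
noncomputable def dB {A : Type*} (x y : ℤ → A) : ℝ :=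
  atTop.limsup fun n : ℕ => (hamIcc x y (-(n : ℤ)) n : ℝ) / (2 * n + 1)

/-- The Weyl pseudodistance on `A^ℤ`. -/
noncomputable def dW {A : Type*} (x y : ℤ → A) : ℝ :=
  atTop.limsup fun n : ℕ => ⨆ m : ℤ, (hamIcc x y (m - n) (m + n) : ℝ) / (2 * n + 1)

/-- The shift map. -/
def shiftMap {A : Type*} (x : ℤ → A) : ℤ → A := fun i => x (i + 1)

/-- A subshift: a shift-invariant subset of `A^ℤ` closed in the Cantor topology. -/
def IsSubshift {A : Type*} (X : Set (ℤ → A)) : Prop :=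
  (∀ x ∈ X, shiftMap x ∈ X) ∧ (∀ x ∈ X, (fun i => x (i - 1)) ∈ X) ∧
  (∀ x : ℤ → A, (∀ n : ℕ, ∃ y ∈ X, ∀ i : ℤ, |i| ≤ (n : ℤ) → y i = x i) → x ∈ X)

/-- The word `w` occurs in (some point of) `X`. -/
def occursIn {A : Type*} (X : Set (ℤ → A)) {k : ℕ} (w : Fin k → A) : Prop :=
  ∃ x ∈ X, ∃ i : ℤ, ∀ j : Fin k, x (i + j) = w j

/-- A shift of finite type: defined by a clopen window condition. -/
def IsSFT {A : Type*} (X : Set (ℤ → A)) : Prop :=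
  ∃ (k : ℕ) (P : (Fin k → A) → Prop), X = {x | ∀ i : ℤ, P (fun j => x (i + j))}

/-- A sliding block code (cellular automaton when `A = B`) of some radius `r`. -/
def IsSlidingBlock {A B : Type*} (φ : (ℤ → A) → (ℤ → B)) : Prop :=
  ∃ (r : ℕ) (f : (Fin (2 * r + 1) → A) → B), ∀ x i, φ x i = f fun j => x (i - r + j)

/-- A sofic shift: the image of an SFT under a sliding block code. -/
def IsSofic {A : Type*} (X : Set (ℤ → A)) : Prop :=
  ∃ (B : Type) (_ : Fintype B) (Y : Set (ℤ → B)) (φ : (ℤ → B) → (ℤ → A)),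
    IsSFT Y ∧ IsSlidingBlock φ ∧ X = φ '' Y

/-- Topological mixing for shift spaces, in terms of words of the language. -/
def IsMixingShift {A : Type*} (X : Set (ℤ → A)) : Prop :=
  ∀ (k l : ℕ) (u : Fin k → A) (v : Fin l → A), occursIn X u → occursIn X v →
    ∃ N : ℕ, ∀ n ≥ N, ∃ x ∈ X, ∃ i : ℤ,
      (∀ j : Fin k, x (i + j) = u j) ∧ (∀ j : Fin l, x (i + k + n + j) = v j)

/-- Topological entropy of a shift space. -/
noncomputable def shiftEntropy {A : Type*} (X : Set (ℤ → A)) : ℝ :=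
  atTop.limsup fun n : ℕ => Real.log (Set.ncard {w : Fin n → A | occursIn X w}) / n

/-- The periodic configuration `∞w∞` with period word `w`. -/
def perPt {A : Type*} {n : ℕ} (hn : 0 < n) (w : Fin n → A) : ℤ → A := fun i =>
  w ⟨(i % (n : ℤ)).toNat, by
    have h1 : (0 : ℤ) < (n : ℤ) := by exact_mod_cast hn
    have h2 := Int.emod_nonneg i (by omega : (n : ℤ) ≠ 0)
    have h3 := Int.emod_lt_of_pos i h1
    omega⟩

/-- The density coding `U' : [0,1] → {0,1}^ℕ`: the dyadic interval of `ℕ` containing `n`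
has left endpoint `2^(Nat.log 2 (n+1)) - 1` and length `L = 2^(Nat.log 2 (n+1))`; it is
filled with `⌊x·L⌋` zeros (`false`) followed by ones (`true`). -/
noncomputable def Uprime (x : ℝ) (n : ℕ) : Bool :=
  decide (⌊x * 2 ^ Nat.log 2 (n + 1)⌋ ≤ ((n : ℤ) + 1 - 2 ^ Nat.log 2 (n + 1)))

/-- The two-sided version `T'(x) = U'(x)^R.U'(x)`. -/
noncomputable def Tprime (x : ℝ) : ℤ → Bool := fun i =>
  if 0 ≤ i then Uprime x i.toNat else Uprime x (-i - 1).toNat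

/-- The one-sided Besicovitch pseudodistance. -/
noncomputable def dB1 {A : Type*} (u v : ℕ → A) : ℝ :=
  atTop.limsup fun n : ℕ =>
    ((@Finset.filter ℕ (fun i => u i ≠ v i) (Classical.decPred _) (Finset.range n)).card : ℝ) / n


/- ================= auxiliary development ================= -/

/-- digit embedding into the 5-letter alphabet -/
def dg : Bool → Fin 5 := fun b => if b then 1 else 0

lemma dg_eq_one_iff (b : Bool) : dg b = 1 ↔ b = true := by cases b <;> simp [dg]
lemma dg_ne_two (b : Bool) : dg b ≠ 2 := by cases b <;> simp [dg]
lemma dg_ne_three (b : Bool) : dg b ≠ 3 := by cases b <;> simp [dg]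
lemma dg_ne_four (b : Bool) : dg b ≠ 4 := by cases b <;> simp [dg]

noncomputable def al : ℝ := Real.sqrt 2 - 1

lemma al_irrational : Irrational al := by
  have h := irrational_sqrt_two
  have : Irrational (Real.sqrt 2 - (1:ℤ)) := h.sub_intCast 1
  simpa [al] using this

lemma sqrt_two_gt : (1.4 : ℝ) < Real.sqrt 2 := by
  have h : (1.4 : ℝ) = Real.sqrt (1.96) := by
    rw [show (1.96:ℝ) = (1.4:ℝ)^2 by norm_num, Real.sqrt_sq (by norm_num)]
  rw [h]
  apply Real.sqrt_lt_sqrt <;> norm_num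

lemma sqrt_two_lt : Real.sqrt 2 < (1.5 : ℝ) := by
  have h : (1.5 : ℝ) = Real.sqrt (2.25) := by
    rw [show (2.25:ℝ) = (1.5:ℝ)^2 by norm_num, Real.sqrt_sq (by norm_num)]
  rw [h]
  apply Real.sqrt_lt_sqrt <;> norm_num

lemma al_pos : 0 < al := by have := sqrt_two_gt; simp only [al]; linarith
lemma al_lt_one : al < 1 := by have := sqrt_two_lt; simp only [al]; linarith

/-- the number of zeros in dyadic block `j` for parameter `β` -/
noncomputable def Zb (β : ℝ) (j : ℕ) : ℕ := (⌊β * 2^j⌋).toNat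

lemma Zb_le {β : ℝ} (hβ1 : β ≤ 1) (j : ℕ) : Zb β j ≤ 2^j := by
  have hle : β * 2^j ≤ (((2^j : ℕ) : ℤ) : ℝ) := by
    push_cast
    nlinarith [pow_pos (by norm_num : (0:ℝ) < 2) j]
  have h : ⌊β * 2^j⌋ ≤ ((2^j : ℕ) : ℤ) := by
    calc ⌊β * 2^j⌋ ≤ ⌊(((2^j : ℕ) : ℤ) : ℝ)⌋ := Int.floor_le_floor hle
      _ = ((2^j : ℕ) : ℤ) := Int.floor_intCast _
  rw [Zb]
  exact Int.toNat_le.mpr h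

lemma Zb_est {β : ℝ} (hβ0 : 0 ≤ β) (j : ℕ) : |(Zb β j : ℝ) - β * 2^j| ≤ 1 := by
  have h0 : (0:ℤ) ≤ ⌊β * 2^j⌋ := Int.floor_nonneg.mpr (by positivity)
  have h1 : ((Zb β j : ℝ)) = ((⌊β * 2^j⌋ : ℤ) : ℝ) := by
    rw [Zb]
    have := Int.toNat_of_nonneg h0
    exact_mod_cast congrArg (fun z : ℤ => (z : ℝ)) this
  have h2 := Int.floor_le (β * 2^j)
  have h3 := Int.lt_floor_add_one (β * 2^j)
  rw [abs_le]; constructor <;> (rw [h1]; linarith)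

lemma Uprime_true_iff {β : ℝ} (hβ0 : 0 ≤ β) {j i : ℕ}
    (h1 : 2^j ≤ i+1) (h2 : i+1 < 2^(j+1)) :
    (Uprime β i = true ↔ 2^j - 1 + Zb β j ≤ i) := by
  have hlog : Nat.log 2 (i+1) = j := Nat.log_eq_of_pow_le_of_lt_pow h1 h2
  have h0 : (0:ℤ) ≤ ⌊β * 2^j⌋ := Int.floor_nonneg.mpr (by positivity)
  have hz : ((Zb β j : ℕ) : ℤ) = ⌊β * 2^j⌋ := Int.toNat_of_nonneg h0
  rw [Uprime, hlog, decide_eq_true_eq, ← hz]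
  have hpc : ((2:ℤ))^j = ((2^j : ℕ) : ℤ) := by push_cast; ring
  rw [hpc]
  constructor <;> (intro h; omega)

lemma block_count {β : ℝ} (hβ0 : 0 ≤ β) (hβ1 : β ≤ 1) (j : ℕ) :
    ((Finset.Ico (2^j - 1) (2^(j+1) - 1)).filter (fun i => Uprime β i = true)).card
      = 2^j - Zb β j := by
  have h2j : 0 < (2:ℕ)^j := Nat.two_pow_pos j
  have h2j1 : (2:ℕ)^(j+1) = 2 * 2^j := by ring
  have key : ((Finset.Ico (2^j - 1) (2^(j+1) - 1)).filter (fun i => Uprime β i = true))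
      = Finset.Ico (2^j - 1 + Zb β j) (2^(j+1) - 1) := by
    ext i
    simp only [Finset.mem_filter, Finset.mem_Ico]
    constructor
    · rintro ⟨⟨ha, hb⟩, hu⟩
      have := (Uprime_true_iff hβ0 (j := j) (i := i) (by omega) (by omega)).mp hu
      omega
    · rintro ⟨ha, hb⟩
      have hZ := Zb_le hβ1 j
      refine ⟨⟨by omega, hb⟩, ?_⟩
      exact (Uprime_true_iff hβ0 (j := j) (i := i) (by omega) (by omega)).mpr (by omega)
  rw [key, Nat.card_Ico]
  have hle := Zb_le hβ1 j
  omega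

lemma range_split (a b : ℕ) (h : a ≤ b) (p : ℕ → Prop) [DecidablePred p] :
    ((Finset.range b).filter p).card
      = ((Finset.range a).filter p).card + ((Finset.Ico a b).filter p).card := by
  rw [Finset.range_eq_Ico, ← Finset.Ico_union_Ico_eq_Ico (Nat.zero_le a) h, Finset.filter_union,
    Finset.card_union_of_disjoint
      (Finset.disjoint_filter_filter (Finset.Ico_disjoint_Ico_consecutive 0 a b)),
    ← Finset.range_eq_Ico]

noncomputable def Cb (β : ℝ) (N : ℕ) : ℕ :=
  ((Finset.range N).filter (fun i => Uprime β i = true)).card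

lemma Cb_blockend {β : ℝ} (hβ0 : 0 ≤ β) (hβ1 : β ≤ 1) (J : ℕ) :
    Cb β (2^(J+1) - 1) = ∑ j ∈ Finset.range (J+1), (2^j - Zb β j) := by
  induction J with
  | zero =>
      have h1 : Finset.range (2^(0+1) - 1) = Finset.Ico (2^0 - 1) (2^(0+1) - 1) := by
        rw [Finset.range_eq_Ico]; norm_num
      rw [Cb, h1, block_count hβ0 hβ1 0, Finset.sum_range_one]
  | succ J ih =>
      have h2j : 0 < (2:ℕ)^(J+1) := Nat.two_pow_pos _
      have h2j1 : (2:ℕ)^(J+2) = 2 * 2^(J+1) := by ring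
      have h : (2:ℕ)^(J+1) - 1 ≤ 2^(J+2) - 1 := by omega
      rw [Cb, range_split (2^(J+1)-1) (2^(J+1+1)-1) h, ← Cb, ih,
        block_count hβ0 hβ1 (J+1), Finset.sum_range_succ (n := J+1)]

lemma geom_sum_real (J : ℕ) : ∑ j ∈ Finset.range J, (2:ℝ)^j = 2^J - 1 := by
  have := geom_sum_eq (by norm_num : (2:ℝ) ≠ 1) J
  rw [this]; norm_num

lemma Cb_est {β : ℝ} (hβ0 : 0 ≤ β) (hβ1 : β ≤ 1) (J : ℕ) :
    |(Cb β (2^(J+1) - 1) : ℝ) - (1-β) * ((2:ℝ)^(J+1) - 1)| ≤ J + 1 := by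
  rw [Cb_blockend hβ0 hβ1]
  have hcast : ((∑ j ∈ Finset.range (J+1), (2^j - Zb β j) : ℕ) : ℝ)
      = ∑ j ∈ Finset.range (J+1), ((2:ℝ)^j - (Zb β j : ℝ)) := by
    rw [Nat.cast_sum]
    apply Finset.sum_congr rfl
    intro j _
    rw [Nat.cast_sub (Zb_le hβ1 j)]
    push_cast; ring
  rw [hcast]
  have hB : (1-β) * ((2:ℝ)^(J+1) - 1) = ∑ j ∈ Finset.range (J+1), (1-β) * 2^j := by
    rw [← Finset.mul_sum, geom_sum_real]
  rw [hB, ← Finset.sum_sub_distrib]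
  calc |∑ j ∈ Finset.range (J+1), (((2:ℝ)^j - Zb β j) - (1-β) * 2^j)|
      ≤ ∑ j ∈ Finset.range (J+1), |((2:ℝ)^j - Zb β j) - (1-β) * 2^j| :=
        Finset.abs_sum_le_sum_abs _ _
    _ ≤ ∑ j ∈ Finset.range (J+1), 1 := by
        apply Finset.sum_le_sum
        intro j _
        have := Zb_est hβ0 j
        calc |((2:ℝ)^j - Zb β j) - (1-β) * 2^j| = |(Zb β j : ℝ) - β * 2^j| := by
              rw [abs_sub_comm]; ring_nf
          _ ≤ 1 := this
    _ = J + 1 := by simp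

lemma block_mismatch_le {β γ : ℝ} (hβ0 : 0 ≤ β) (hγ0 : 0 ≤ γ) (j : ℕ) :
    (((Finset.Ico (2^j - 1) (2^(j+1) - 1)).filter
        (fun i => Uprime β i ≠ Uprime γ i)).card : ℝ)
      ≤ |β - γ| * 2^j + 2 := by
  have h2j : 0 < (2:ℕ)^j := Nat.two_pow_pos j
  have h2j1 : (2:ℕ)^(j+1) = 2 * 2^j := by ring
  have hsub : (Finset.Ico (2^j-1) (2^(j+1)-1)).filter (fun i => Uprime β i ≠ Uprime γ i)
      ⊆ Finset.Ico (2^j - 1 + min (Zb β j) (Zb γ j)) (2^j - 1 + max (Zb β j) (Zb γ j)) := by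
    intro i hi
    simp only [Finset.mem_filter, Finset.mem_Ico] at hi ⊢
    obtain ⟨⟨ha, hb⟩, hne⟩ := hi
    have hβi := Uprime_true_iff hβ0 (j := j) (i := i) (by omega) (by omega)
    have hγi := Uprime_true_iff hγ0 (j := j) (i := i) (by omega) (by omega)
    by_cases hb1 : Uprime β i = true <;> by_cases hc1 : Uprime γ i = true
    · exact absurd (hb1.trans hc1.symm) hne
    · have h1 := hβi.mp hb1
      have h2 : ¬ (2^j - 1 + Zb γ j ≤ i) := fun h => hc1 (hγi.mpr h)
      omega
    · have h1 := hγi.mp hc1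
      have h2 : ¬ (2^j - 1 + Zb β j ≤ i) := fun h => hb1 (hβi.mpr h)
      omega
    · exact absurd ((Bool.eq_false_iff.mpr hb1).trans (Bool.eq_false_iff.mpr hc1).symm) hne
  have hcard : ((Finset.Ico (2^j - 1) (2^(j+1) - 1)).filter
        (fun i => Uprime β i ≠ Uprime γ i)).card ≤ Zb β j ⊔ Zb γ j - Zb β j ⊓ Zb γ j := by
    calc ((Finset.Ico (2^j - 1) (2^(j+1) - 1)).filter
        (fun i => Uprime β i ≠ Uprime γ i)).card
        ≤ (Finset.Ico (2^j - 1 + Zb β j ⊓ Zb γ j) (2^j - 1 + (Zb β j ⊔ Zb γ j))).card :=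
          Finset.card_le_card hsub
      _ = Zb β j ⊔ Zb γ j - Zb β j ⊓ Zb γ j := by rw [Nat.card_Ico]; omega
  have habs : |(Zb β j : ℝ) - (Zb γ j : ℝ)| ≤ |β - γ| * 2^j + 2 := by
    have h1 := Zb_est hβ0 j
    have h2 := Zb_est hγ0 j
    have h3 : (Zb β j : ℝ) - (Zb γ j : ℝ)
        = ((Zb β j : ℝ) - β * 2^j) - ((Zb γ j : ℝ) - γ * 2^j) + (β * 2^j - γ * 2^j) := by ring
    have h4 : |β * 2^j - γ * 2^j| = |β - γ| * 2^j := by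
      rw [show β * 2^j - γ * 2^j = (β - γ) * 2^j by ring, abs_mul,
        abs_of_nonneg (by positivity : (0:ℝ) ≤ (2:ℝ)^j)]
    calc |(Zb β j : ℝ) - (Zb γ j : ℝ)|
        ≤ |((Zb β j : ℝ) - β * 2^j) - ((Zb γ j : ℝ) - γ * 2^j)| + |β * 2^j - γ * 2^j| := by
          rw [h3]; exact abs_add_le _ _
      _ ≤ (|(Zb β j : ℝ) - β * 2^j| + |(Zb γ j : ℝ) - γ * 2^j|) + |β * 2^j - γ * 2^j| := by
          gcongr
          exact abs_sub _ _
      _ ≤ |β - γ| * 2^j + 2 := by rw [h4]; linarith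
  calc (((Finset.Ico (2^j - 1) (2^(j+1) - 1)).filter
        (fun i => Uprime β i ≠ Uprime γ i)).card : ℝ)
      ≤ ((Zb β j ⊔ Zb γ j - Zb β j ⊓ Zb γ j : ℕ) : ℝ) := by exact_mod_cast hcard
    _ = |(Zb β j : ℝ) - (Zb γ j : ℝ)| := by
        rw [Nat.cast_sub min_le_max, Nat.cast_max, Nat.cast_min, max_sub_min_eq_abs]
        exact abs_sub_comm _ _
    _ ≤ |β - γ| * 2^j + 2 := habs

noncomputable def Db (β γ : ℝ) (N : ℕ) : ℕ :=
  ((Finset.range N).filter (fun i => Uprime β i ≠ Uprime γ i)).card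

lemma Db_blockend_le {β γ : ℝ} (hβ0 : 0 ≤ β) (hγ0 : 0 ≤ γ) (J : ℕ) :
    (Db β γ (2^(J+1) - 1) : ℝ) ≤ |β - γ| * 2^(J+1) + 2*(J+1) := by
  induction J with
  | zero =>
      have h1 : Finset.range (2^(0+1) - 1) = Finset.Ico (2^0 - 1) (2^(0+1) - 1) := by
        rw [Finset.range_eq_Ico]; norm_num
      rw [Db, h1]
      have := block_mismatch_le hβ0 hγ0 0
      refine le_trans this ?_
      have := abs_nonneg (β - γ)
      push_cast
      nlinarith
  | succ J ih =>
      have h2j : 0 < (2:ℕ)^(J+1) := Nat.two_pow_pos _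
      have h2j1 : (2:ℕ)^(J+2) = 2 * 2^(J+1) := by ring
      have h : (2:ℕ)^(J+1) - 1 ≤ 2^(J+1+1) - 1 := by omega
      rw [Db, range_split (2^(J+1)-1) (2^(J+1+1)-1) h, ← Db]
      push_cast
      have hb := block_mismatch_le hβ0 hγ0 (J+1)
      have h2r : (2:ℝ)^(J+1+1) = 2 * 2^(J+1) := by ring
      have := abs_nonneg (β - γ)
      nlinarith [ih, hb]

lemma Db_mono (β γ : ℝ) {M N : ℕ} (h : M ≤ N) : Db β γ M ≤ Db β γ N :=
  Finset.card_le_card (Finset.filter_subset_filter _ (Finset.range_subset_range.mpr h))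

lemma Db_le_all {β γ : ℝ} (hβ0 : 0 ≤ β) (hγ0 : 0 ≤ γ) (N : ℕ) (hN : 1 ≤ N) :
    (Db β γ N : ℝ) ≤ |β - γ| * (2*N) + 2*((Nat.log 2 N : ℝ) + 1) := by
  set L := Nat.log 2 N with hL
  have h1 : N < 2^(L+1) := Nat.lt_pow_succ_log_self (by norm_num) N
  have h2 : 2^L ≤ N := Nat.pow_log_le_self 2 (by omega)
  have hm : Db β γ N ≤ Db β γ (2^(L+1) - 1) := Db_mono β γ (by omega)
  have hcast : ((2:ℕ)^L : ℝ) ≤ (N : ℝ) := by exact_mod_cast h2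
  calc (Db β γ N : ℝ) ≤ (Db β γ (2^(L+1) - 1) : ℝ) := by exact_mod_cast hm
    _ ≤ |β - γ| * 2^(L+1) + 2*(L+1) := Db_blockend_le hβ0 hγ0 L
    _ ≤ |β - γ| * (2*N) + 2*((L:ℝ)+1) := by
        have : (2:ℝ)^(L+1) ≤ 2*N := by
          rw [pow_succ]
          push_cast at hcast ⊢
          nlinarith
        have habs := abs_nonneg (β - γ)
        nlinarith

lemma Cb_mono (β : ℝ) {M N : ℕ} (h : M ≤ N) : Cb β M ≤ Cb β N :=
  Finset.card_le_card (Finset.filter_subset_filter _ (Finset.range_subset_range.mpr h))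

lemma Cb_le_add (β : ℝ) {M N : ℕ} (h : M ≤ N) : Cb β N ≤ Cb β M + (N - M) := by
  rw [Cb, range_split M N h, ← Cb]
  have : ((Finset.Ico M N).filter (fun i => Uprime β i = true)).card ≤ N - M := by
    calc ((Finset.Ico M N).filter (fun i => Uprime β i = true)).card
        ≤ (Finset.Ico M N).card := Finset.card_filter_le _ _
      _ = N - M := Nat.card_Ico M N
  omega

lemma Cb_lip' (β : ℝ) {M N : ℕ} (h : M ≤ N) : |(Cb β N : ℝ) - Cb β M| ≤ (N:ℝ) - M := by
  have h1 := Cb_mono β h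
  have h2 := Cb_le_add β h
  have h1' : (Cb β M : ℝ) ≤ Cb β N := by exact_mod_cast h1
  rw [abs_of_nonneg (by linarith)]
  have h2' : (Cb β N : ℝ) ≤ (Cb β M : ℝ) + ((N : ℝ) - M) := by
    have := (Nat.cast_le (α := ℝ)).mpr h2
    push_cast [Nat.cast_sub h] at this
    linarith
  linarith

lemma Cb_lip (β : ℝ) (M N : ℕ) : |(Cb β N : ℝ) - Cb β M| ≤ |(N:ℝ) - M| := by
  rcases le_total M N with h | h
  · calc |(Cb β N : ℝ) - Cb β M| ≤ (N:ℝ) - M := Cb_lip' β h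
      _ ≤ |(N:ℝ) - M| := le_abs_self _
  · calc |(Cb β N : ℝ) - Cb β M| = |(Cb β M : ℝ) - Cb β N| := abs_sub_comm _ _
      _ ≤ (M:ℝ) - N := Cb_lip' β h
      _ ≤ |(M:ℝ) - N| := le_abs_self _
      _ = |(N:ℝ) - M| := abs_sub_comm _ _

lemma Uprime_ge_one {r : ℝ} (hr : 1 ≤ r) (i : ℕ) : Uprime r i = false := by
  rw [Uprime, decide_eq_false_iff_not]
  intro hcon
  set L := Nat.log 2 (i+1) with hL
  have h1 : 2^L ≤ i+1 := Nat.pow_log_le_self 2 (by omega)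
  have h2 : i+1 < 2^(L+1) := Nat.lt_pow_succ_log_self (by norm_num) (i+1)
  have hfl : ((2:ℤ)^L) ≤ ⌊r * 2^L⌋ := by
    apply Int.le_floor.mpr
    push_cast
    nlinarith [pow_pos (by norm_num : (0:ℝ) < 2) L]
  have hp : ((2:ℤ)^L) = ((2^L : ℕ) : ℤ) := by push_cast; ring
  rw [hp] at hfl hcon
  omega

lemma Uprime_clamp {r : ℝ} (hr : 0 ≤ r) (i : ℕ) : Uprime r i = Uprime (min r 1) i := by
  rcases le_total r 1 with h | h
  · rw [min_eq_left h]
  · rw [min_eq_right h, Uprime_ge_one h, Uprime_ge_one le_rfl]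

lemma eventually_linear_le_two_pow (C δ : ℝ) (hδ : 0 < δ) :
    ∀ᶠ J : ℕ in atTop, (J : ℝ) + C ≤ δ * 2^J := by
  obtain ⟨k, hk⟩ := pow_unbounded_of_one_lt ((2 + |C|)/δ) (by norm_num : (1:ℝ) < 2)
  filter_upwards [eventually_ge_atTop (2*k)] with J hJ
  have hkJ : k ≤ J := by omega
  have hsplit : (2:ℝ)^J = 2^k * 2^(J - k) := by rw [← pow_add]; congr 1; omega
  have h2 : ((J - k : ℕ) : ℝ) + 1 ≤ 2^(J - k) := by
    have := Nat.lt_two_pow_self (n := J - k)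
    have := Nat.succ_le_of_lt this
    exact_mod_cast this
  have hδ2k : 2 + |C| ≤ δ * 2^k := by
    rw [div_lt_iff₀ hδ] at hk
    linarith
  have hJk : ((J - k : ℕ) : ℝ) = (J:ℝ) - k := by
    push_cast [Nat.cast_sub hkJ]; ring
  have hpos : (0:ℝ) < 2^(J - k) := by positivity
  have e1 : (2 + |C|) * (((J - k : ℕ) : ℝ) + 1) ≤ (δ * 2^k) * 2^(J - k) := by
    have hx : (0:ℝ) ≤ ((J - k : ℕ) : ℝ) + 1 := by positivity
    have hy : (0:ℝ) ≤ δ * 2^k := mul_nonneg hδ.le (by positivity)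
    exact mul_le_mul hδ2k h2 hx hy
  have e2 : |C| ≤ |C| * (((J - k : ℕ) : ℝ) + 1) := by
    nlinarith [abs_nonneg C, (show (0:ℝ) ≤ ((J - k : ℕ) : ℝ) from Nat.cast_nonneg _)]
  have hJr : (2*k : ℝ) ≤ J := by exact_mod_cast hJ
  rw [hsplit]
  have hC := le_abs_self C
  nlinarith

/-- The generator configuration `∞a b^m c^n w(m/n)` with the `b` block starting at 0. -/
noncomputable def G (m n : ℕ) : ℤ → Fin 5 := fun j =>
  if j < 0 then 2 else if j < (m:ℤ) then 3 else if j < (m:ℤ) + n then 4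
  else dg (Uprime ((m : ℝ)/(n : ℝ)) (j - m - n).toNat)

/-- The subshift: all configurations whose central windows all occur in some generator. -/
def XX : Set (ℤ → Fin 5) :=
  {x | ∀ N : ℕ, ∃ m n : ℕ, ∃ t : ℤ, ∀ i : ℤ, |i| ≤ (N:ℤ) → x i = G m n (i + t)}

noncomputable def yy : ℤ → Fin 5 := fun i =>
  if i < 0 then 2 else dg (Uprime al i.toNat)

lemma G_two (m n : ℕ) {j : ℤ} (h : j < 0) : G m n j = 2 := by rw [G]; simp [h]

lemma G_b (m n : ℕ) {j : ℤ} (h0 : 0 ≤ j) (h : j < (m:ℤ)) : G m n j = 3 := by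
  rw [G]; rw [if_neg (by omega), if_pos h]

lemma G_c (m n : ℕ) {j : ℤ} (h : (m:ℤ) ≤ j) (h2 : j < (m:ℤ) + n) : G m n j = 4 := by
  rw [G]; rw [if_neg (by omega), if_neg (by omega), if_pos h2]

lemma G_d (m n : ℕ) {j : ℤ} (h : (m:ℤ) + n ≤ j) :
    G m n j = dg (Uprime ((m : ℝ)/(n : ℝ)) (j - m - n).toNat) := by
  rw [G]; rw [if_neg (by omega), if_neg (by omega), if_neg (by omega)]

lemma G_eq_two_iff (m n : ℕ) (j : ℤ) : G m n j = 2 ↔ j < 0 := by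
  constructor
  · intro h
    by_contra hc
    push_neg at hc
    rcases lt_or_ge j (m:ℤ) with h1 | h1
    · rw [G_b m n hc h1] at h; exact absurd h (by decide)
    · rcases lt_or_ge j ((m:ℤ)+n) with h2 | h2
      · rw [G_c m n h1 h2] at h; exact absurd h (by decide)
      · rw [G_d m n h2] at h; exact dg_ne_two _ h
  · exact G_two m n

lemma abs_le_of_natAbs {i : ℤ} {N : ℕ} (h : i.natAbs ≤ N) : |i| ≤ (N:ℤ) := by
  rw [Int.abs_eq_natAbs]; exact_mod_cast h

lemma XX_subshift : IsSubshift XX := by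
  refine ⟨?_, ?_, ?_⟩
  · intro x hx N
    obtain ⟨m, n, t, hw⟩ := hx (N+1)
    refine ⟨m, n, t+1, fun i hi => ?_⟩
    have h1 := hw (i+1) (by
      have h0 : |i| ≤ (N:ℤ) := hi
      have h2 : |i+1| ≤ |i| + 1 := by
        calc |i+1| ≤ |i| + |(1:ℤ)| := abs_add_le _ _
          _ = |i| + 1 := by norm_num
      push_cast
      omega)
    rw [shiftMap]
    rw [h1]
    congr 1
    ring
  · intro x hx N
    obtain ⟨m, n, t, hw⟩ := hx (N+1)
    refine ⟨m, n, t-1, fun i hi => ?_⟩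
    have h1 := hw (i-1) (by
      have : |i| ≤ (N:ℤ) := hi
      have h2 : |i-1| ≤ |i| + 1 := by
        calc |i-1| ≤ |i| + |(-1 : ℤ)| := abs_sub _ _
          _ = |i| + 1 := by norm_num
      push_cast
      omega)
    simp only
    rw [h1]
    congr 1
    ring
  · intro x hx N
    obtain ⟨z, hz, hagree⟩ := hx N
    obtain ⟨m, n, t, hw⟩ := hz N
    exact ⟨m, n, t, fun i hi => (hagree i hi).symm ▸ (hw i hi)⟩

lemma downset {x : ℤ → Fin 5} (hx : x ∈ XX) {i j : ℤ} (hij : j ≤ i) (h : x i = 2) :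
    x j = 2 := by
  obtain ⟨m, n, t, hw⟩ := hx (i.natAbs + j.natAbs)
  have h1 := hw i (abs_le_of_natAbs (by omega))
  have h2 := hw j (abs_le_of_natAbs (by omega))
  rw [h1] at h
  have hit : i + t < 0 := (G_eq_two_iff m n (i+t)).mp h
  rw [h2]
  exact G_two m n (by omega)

/-- The key forcing lemma: once the junction pattern `a b^m c^n` of `x` is identified,
all digits of `x` to the right are determined. -/
lemma forcing {x : ℤ → Fin 5} (hx : x ∈ XX) {p : ℤ} {m n : ℕ}
    (hpa : x (p-1) = 2) (hpna : x p ≠ 2)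
    (hb : ∀ k : ℕ, k < m → x (p+k) = 3) (hmb : x (p+(m:ℤ)) ≠ 3)
    (hc : ∀ k : ℕ, k < n → x (p+(m:ℤ)+k) = 4) (hnc : x (p+(m:ℤ)+(n:ℤ)) ≠ 4) :
    ∀ k : ℕ, x (p+(m:ℤ)+(n:ℤ)+k) = dg (Uprime ((m : ℝ)/(n : ℝ)) k) := by
  intro k
  set R : ℕ := p.natAbs + m + n + k + 1 with hR
  obtain ⟨m', n', t, hw⟩ := hx R
  -- all relevant coordinates are within the window
  have win : ∀ q : ℤ, p - 1 ≤ q → q ≤ p + m + n + k → x q = G m' n' (q + t) := by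
    intro q hq1 hq2
    exact hw q (abs_le_of_natAbs (by omega))
  have hpa' := win (p-1) (by omega) (by omega)
  have hp' := win p (by omega) (by omega)
  rw [hpa'] at hpa
  have hneg : p - 1 + t < 0 := (G_eq_two_iff m' n' _).mp hpa
  have hpos : ¬ (p + t < 0) := fun hcon => hpna (hp'.trans (G_two m' n' hcon))
  have ht : t = -p := by omega
  subst ht
  -- so x (p + j) = G m' n' j for j in range
  have key : ∀ j : ℤ, 0 ≤ j → j ≤ (m:ℤ) + n + k → x (p + j) = G m' n' j := by
    intro j h1 h2
    have := win (p + j) (by omega) (by omega)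
    rw [this]
    congr 1
    ring
  -- m' = m
  have hmm : m' = m := by
    by_contra hne
    rcases Nat.lt_or_ge m' m with hlt | hge
    · have h1 : x (p + (m':ℤ)) = 3 := hb m' hlt
      rw [key (m':ℤ) (by omega) (by push_cast; omega)] at h1
      rcases Nat.eq_zero_or_pos n' with hn0 | hn0
      · rw [G_d m' n' (by push_cast; omega)] at h1
        exact dg_ne_three _ h1
      · rw [G_c m' n' (by omega) (by push_cast; omega)] at h1
        exact absurd h1 (by decide)
    · have hlt : m < m' := by omega
      have h1 : x (p + (m:ℤ)) = G m' n' (m:ℤ) := key (m:ℤ) (by omega) (by omega)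
      rw [G_b m' n' (by omega) (by push_cast; omega)] at h1
      exact hmb h1
  rw [hmm] at key
  -- n' = n
  have hnn : n' = n := by
    by_contra hne
    rcases Nat.lt_or_ge n' n with hlt | hge
    · have h1 : x (p + (m:ℤ) + (n':ℤ)) = 4 := hc n' hlt
      have h2 : x (p + ((m:ℤ) + (n':ℤ))) = G m n' ((m:ℤ) + n') :=
        key ((m:ℤ) + n') (by omega) (by push_cast; omega)
      rw [show p + ((m:ℤ) + (n':ℤ)) = p + (m:ℤ) + (n':ℤ) by ring] at h2
      rw [h2, G_d m n' (by omega)] at h1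
      exact dg_ne_four _ h1
    · have hlt : n < n' := by omega
      have h2 : x (p + ((m:ℤ) + (n:ℤ))) = G m n' ((m:ℤ) + n) :=
        key ((m:ℤ) + n) (by omega) (by push_cast; omega)
      rw [show p + ((m:ℤ) + (n:ℤ)) = p + (m:ℤ) + (n:ℤ) by ring] at h2
      rw [G_c m n' (by omega) (by push_cast; omega)] at h2
      exact hnc h2
  rw [hnn] at key
  have h2 : x (p + ((m:ℤ) + (n:ℤ) + k)) = G m n ((m:ℤ) + n + k) :=
    key ((m:ℤ) + n + k) (by omega) (by omega)
  rw [show p + ((m:ℤ) + (n:ℤ) + (k:ℤ)) = p + (m:ℤ) + (n:ℤ) + k by ring] at h2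
  rw [h2, G_d m n (by omega)]
  congr 1
  rw [show (m:ℤ) + n + k - m - n = (k:ℤ) by ring]
  simp

lemma yy_digit {i : ℤ} (h : 0 ≤ i) : yy i = dg (Uprime al i.toNat) := by
  simp only [yy]; rw [if_neg (by omega)]

lemma yy_neg {i : ℤ} (h : i < 0) : yy i = 2 := by
  simp only [yy]; rw [if_pos h]

lemma ham_eq (x y : ℤ → Fin 5) (a b : ℤ) :
    hamIcc x y a b = ((Finset.Icc a b).filter (fun i => x i ≠ y i)).card := by
  rw [hamIcc]
  congr 1
  exact Finset.filter_congr_decidable _ _ _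

lemma ham_card_le (x y : ℤ → Fin 5) (n : ℕ) : hamIcc x y (-(n:ℤ)) n ≤ 2*n+1 := by
  rw [ham_eq]
  calc ((Finset.Icc (-(n:ℤ)) n).filter (fun i => x i ≠ y i)).card
      ≤ (Finset.Icc (-(n:ℤ)) n).card := Finset.card_filter_le _ _
    _ = 2*n+1 := by rw [Int.card_Icc]; omega

lemma dB_bounded (x y : ℤ → Fin 5) :
    IsBoundedUnder (· ≤ ·) atTop (fun n : ℕ => (hamIcc x y (-(n:ℤ)) n : ℝ)/(2*n+1)) := by
  apply Filter.isBoundedUnder_of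
  refine ⟨1, fun n => ?_⟩
  rw [div_le_one (by positivity)]
  have h1 := ham_card_le x y n
  calc (hamIcc x y (-(n:ℤ)) n : ℝ) ≤ ((2*n+1 : ℕ) : ℝ) := Nat.cast_le.mpr h1
    _ = 2*(n:ℝ)+1 := by push_cast; ring

lemma dB_zero_frequently_contra {x y : ℤ → Fin 5} {c : ℝ} (hc : 0 < c)
    (hfreq : ∃ᶠ n : ℕ in atTop, c ≤ (hamIcc x y (-(n:ℤ)) n : ℝ)/(2*n+1))
    (h0 : dB x y = 0) : False := by
  have hle := Filter.le_limsup_of_frequently_le hfreq (dB_bounded x y)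
  rw [dB] at h0
  rw [h0] at hle
  linarith

lemma dB_self {A : Type*} (x : ℤ → A) : dB x x = 0 := by
  have h : ∀ n : ℕ, hamIcc x x (-(n:ℤ)) n = 0 := by
    intro n
    rw [hamIcc, Finset.card_eq_zero]
    apply Finset.eq_empty_of_forall_notMem
    intro i hi
    have := (@Finset.mem_filter ℤ (fun i => x i ≠ x i) (Classical.decPred _)
      (Finset.Icc (-(n:ℤ)) n) i).mp hi
    exact this.2 rfl
  rw [dB]
  have heq : (fun n : ℕ => (hamIcc x x (-(n:ℤ)) n : ℝ)/(2*n+1)) = fun _ => (0:ℝ) := by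
    funext n; rw [h n]; simp
  rw [heq, Filter.limsup_const]

lemma count_shift (f : ℕ → Bool) (x : ℤ → Fin 5) (q W : ℤ) (hW : 0 ≤ W) (hq : q ≤ W)
    (hchar : ∀ i : ℤ, 0 ≤ i → i ≤ W → (x i = 1 ↔ (q ≤ i ∧ f (i - q).toNat = true))) :
    ((Finset.Icc (0:ℤ) W).filter (fun i => x i = 1)).card
      + ((Finset.range ((-q).toNat)).filter (fun k => f k = true)).card
      = ((Finset.range ((W - q).toNat + 1)).filter (fun k => f k = true)).card := by
  have hbij : ((Finset.Icc (0:ℤ) W).filter (fun i => x i = 1)).card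
      = ((Finset.Ico ((-q).toNat) ((W - q).toNat + 1)).filter (fun k => f k = true)).card := by
    apply Finset.card_bij' (fun i _ => (i - q).toNat) (fun k _ => q + (k:ℤ))
    · intro i hi
      simp only [Finset.mem_filter, Finset.mem_Icc] at hi
      obtain ⟨⟨h1, h2⟩, h3⟩ := hi
      obtain ⟨h4, h5⟩ := (hchar i h1 h2).mp h3
      simp only [Finset.mem_filter, Finset.mem_Ico]
      exact ⟨⟨by omega, by omega⟩, h5⟩
    · intro k hk
      simp only [Finset.mem_filter, Finset.mem_Ico] at hk
      obtain ⟨⟨h1, h2⟩, h3⟩ := hk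
      simp only [Finset.mem_filter, Finset.mem_Icc]
      have hq0 : 0 ≤ q + (k:ℤ) := by omega
      have hqW : q + (k:ℤ) ≤ W := by omega
      refine ⟨⟨hq0, hqW⟩, (hchar _ hq0 hqW).mpr ⟨by omega, ?_⟩⟩
      rw [show q + (k:ℤ) - q = (k:ℤ) by ring, Int.toNat_natCast]
      exact h3
    · intro i hi
      simp only [Finset.mem_filter, Finset.mem_Icc] at hi
      obtain ⟨⟨h1, h2⟩, h3⟩ := hi
      have := ((hchar i h1 h2).mp h3).1
      omega
    · intro k hk
      simp only [Finset.mem_filter, Finset.mem_Ico] at hk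
      omega
  rw [hbij]
  have hsplit := range_split ((-q).toNat) ((W - q).toNat + 1) (by omega) (fun k => f k = true)
  omega

lemma tail_contra {x : ℤ → Fin 5} (s : ℤ)
    (h : ∀ i : ℤ, s ≤ i → (x i = 2 ∨ x i = 3 ∨ x i = 4)) (h0 : dB x yy = 0) : False := by
  apply dB_zero_frequently_contra (show (0:ℝ) < 1/3 by norm_num) ?_ h0
  apply Filter.Eventually.frequently
  rw [eventually_atTop]
  refine ⟨3*(s.natAbs) + 3, fun n hn => ?_⟩
  have hsa : s ≤ (s.natAbs : ℤ) := by omega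
  have hsub : Finset.Icc ((s.natAbs : ℤ)) (n:ℤ) ⊆
      (Finset.Icc (-(n:ℤ)) n).filter (fun i => x i ≠ yy i) := by
    intro i hi
    simp only [Finset.mem_Icc] at hi
    obtain ⟨h1, h2⟩ := hi
    simp only [Finset.mem_filter, Finset.mem_Icc]
    refine ⟨⟨by omega, h2⟩, ?_⟩
    have hyi : yy i = dg (Uprime al i.toNat) := yy_digit (by omega)
    rcases h i (by omega) with h3 | h3 | h3 <;> (rw [h3, hyi]; intro hcon)
    · exact dg_ne_two _ hcon.symm
    · exact dg_ne_three _ hcon.symm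
    · exact dg_ne_four _ hcon.symm
  have hcard : ((n:ℤ) + 1 - s.natAbs).toNat ≤ hamIcc x yy (-(n:ℤ)) n := by
    rw [ham_eq]
    calc ((n:ℤ) + 1 - s.natAbs).toNat = (Finset.Icc ((s.natAbs : ℤ)) (n:ℤ)).card :=
          (Int.card_Icc _ _).symm
      _ ≤ _ := Finset.card_le_card hsub
  have hN : n - s.natAbs ≤ hamIcc x yy (-(n:ℤ)) n := by omega
  have hham : (n : ℝ) - s.natAbs ≤ (hamIcc x yy (-(n:ℤ)) n : ℝ) := by
    have hle : s.natAbs ≤ n := by omega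
    calc (n : ℝ) - s.natAbs = ((n - s.natAbs : ℕ) : ℝ) := by
          rw [Nat.cast_sub hle]
      _ ≤ _ := Nat.cast_le.mpr hN
  rw [le_div_iff₀ (by positivity)]
  have hn3 : (3 * (s.natAbs:ℝ) + 3) ≤ n := by exact_mod_cast hn
  nlinarith [Nat.cast_nonneg (α := ℝ) s.natAbs]

lemma ones_diff (x y : ℤ → Fin 5) (S : Finset ℤ) :
    (S.filter (fun i => x i = 1)).card
      ≤ (S.filter (fun i => y i = 1)).card + (S.filter (fun i => x i ≠ y i)).card := by
  calc (S.filter (fun i => x i = 1)).card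
      ≤ ((S.filter (fun i => y i = 1)) ∪ (S.filter (fun i => x i ≠ y i))).card := by
        apply Finset.card_le_card
        intro i hi
        rw [Finset.mem_filter] at hi
        rw [Finset.mem_union, Finset.mem_filter, Finset.mem_filter]
        by_cases hy : y i = 1
        · exact Or.inl ⟨hi.1, hy⟩
        · exact Or.inr ⟨hi.1, fun hcon => hy (hcon ▸ hi.2)⟩
    _ ≤ _ := Finset.card_union_le _ _

lemma ones_diff' (x y : ℤ → Fin 5) (S : Finset ℤ) :
    (S.filter (fun i => y i = 1)).card
      ≤ (S.filter (fun i => x i = 1)).card + (S.filter (fun i => x i ≠ y i)).card := by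
  have h := ones_diff y x S
  have he : (S.filter (fun i => y i ≠ x i)) = (S.filter (fun i => x i ≠ y i)) := by
    apply Finset.filter_congr
    intro i _
    simp [ne_comm]
  rw [he] at h
  exact h

lemma abs_ge_of_close {a b a' b' e1 e2 : ℝ} (h1 : |a - a'| ≤ e1) (h2 : |b - b'| ≤ e2) :
    |a' - b'| - e1 - e2 ≤ |a - b| := by
  have t1 : |a' - b'| ≤ |a' - a| + |a - b'| := abs_sub_le _ _ _
  have t2 : |a - b'| ≤ |a - b| + |b - b'| := abs_sub_le _ _ _
  have t3 : |a' - a| = |a - a'| := abs_sub_comm _ _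
  linarith

set_option maxHeartbeats 2000000 in
lemma digit_contra {x : ℤ → Fin 5} {p : ℤ} {m n : ℕ}
    (ha : ∀ i : ℤ, i < p → x i = 2)
    (hb : ∀ k : ℕ, k < m → x (p+(k:ℤ)) = 3)
    (hc : ∀ k : ℕ, k < n → x (p+(m:ℤ)+(k:ℤ)) = 4)
    (hd : ∀ k : ℕ, x (p+(m:ℤ)+(n:ℤ)+(k:ℤ)) = dg (Uprime ((m:ℝ)/(n:ℝ)) k))
    (h0 : dB x yy = 0) : False := by
  set r : ℝ := (m:ℝ)/(n:ℝ) with hrdef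
  have hr0 : 0 ≤ r := by positivity
  set β : ℝ := min r 1 with hβdef
  have hβ0 : 0 ≤ β := le_min hr0 zero_le_one
  have hβ1 : β ≤ 1 := min_le_right _ _
  have hβrat : β = ((min ((m:ℚ)/(n:ℚ)) 1 : ℚ) : ℝ) := by
    rw [Rat.cast_min]; push_cast; rfl
  have hαβ : al ≠ β := by
    rw [hβrat]; exact al_irrational.ne_rat _
  set δ : ℝ := |al - β| with hδdef
  have hδ : 0 < δ := abs_pos.mpr (sub_ne_zero.mpr hαβ)
  set q : ℤ := p + m + n with hqdef
  apply dB_zero_frequently_contra (show (0:ℝ) < δ/16 by positivity) ?_ h0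
  rw [frequently_atTop]
  intro N0
  have ev1 := eventually_linear_le_two_pow ((N0:ℝ) + q.natAbs + 2) 1 one_pos
  have ev2 := eventually_linear_le_two_pow (1 + (q.natAbs:ℝ)) (δ/4) (by positivity)
  obtain ⟨J, hJ1, hJ2⟩ := (ev1.and ev2).exists
  -- basic quantities
  set E : ℕ := 2^(J+1) - 1 with hEdef
  have hEpos : 1 ≤ E := by
    have := Nat.one_le_two_pow (n := J+1)
    have h2 : (2:ℕ)^(J+1) = 2*2^J := by ring
    have := Nat.two_pow_pos J
    omega
  have hE2J : 2^J ≤ E := by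
    have h2 : (2:ℕ)^(J+1) = 2*2^J := by ring
    have := Nat.two_pow_pos J
    omega
  -- from ev1 get the ℕ bound N0 + q.natAbs + 2 ≤ 2^J
  have hJ1' : N0 + q.natAbs + 2 ≤ 2^J := by
    have hJ0 : (0:ℝ) ≤ (J:ℝ) := Nat.cast_nonneg J
    have : ((N0 + q.natAbs + 2 : ℕ) : ℝ) ≤ ((2^J : ℕ) : ℝ) := by push_cast; linarith
    exact_mod_cast this
  set W : ℤ := (E:ℤ) - 1 + q with hWdef
  have hW0 : 0 ≤ W := by
    have hq1 : -(q.natAbs:ℤ) ≤ q := by omega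
    have : (2^J : ℕ) ≤ E := hE2J
    omega
  have hqW : q ≤ W := by omega
  set nW : ℕ := W.toNat with hnWdef
  have hnW : (nW:ℤ) = W := Int.toNat_of_nonneg hW0
  refine ⟨nW, by omega, ?_⟩
  -- characterizations
  have hcharx : ∀ i : ℤ, 0 ≤ i → i ≤ W → (x i = 1 ↔ (q ≤ i ∧ Uprime β (i - q).toNat = true)) := by
    intro i hi0 hiW
    by_cases hiq : q ≤ i
    · have hk : (((i - q).toNat : ℤ)) = i - q := Int.toNat_of_nonneg (by omega)
      have heq : p+(m:ℤ)+(n:ℤ)+(((i - q).toNat : ℕ):ℤ) = i := by rw [hk]; omega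
      have := hd (i - q).toNat
      rw [heq] at this
      rw [this, dg_eq_one_iff, Uprime_clamp hr0]
      simp [hiq, hβdef]
    · constructor
      · intro hcon
        exfalso
        rcases lt_or_ge i p with h1 | h1
        · rw [ha i h1] at hcon; exact absurd hcon (by decide)
        · rcases lt_or_ge i (p + (m:ℤ)) with h2 | h2
          · have hkk : (((i - p).toNat : ℤ)) = i - p := Int.toNat_of_nonneg (by omega)
            have := hb (i-p).toNat (by omega)
            rw [show p + (((i-p).toNat : ℕ):ℤ) = i by omega] at this
            rw [this] at hcon; exact absurd hcon (by decide)
          · have hkk : (((i - p - m).toNat : ℤ)) = i - p - m := Int.toNat_of_nonneg (by omega)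
            have := hc (i-p-m).toNat (by omega)
            rw [show p + (m:ℤ) + (((i-p-m).toNat : ℕ):ℤ) = i by omega] at this
            rw [this] at hcon; exact absurd hcon (by decide)
      · intro hcon; exact absurd hcon.1 hiq
  have hchary : ∀ i : ℤ, 0 ≤ i → i ≤ W → (yy i = 1 ↔ ((0:ℤ) ≤ i ∧ Uprime al (i - 0).toNat = true)) := by
    intro i hi0 hiW
    rw [yy_digit hi0, dg_eq_one_iff, sub_zero]
    simp [hi0]
  -- counts
  have cs1 := count_shift (fun k => Uprime β k) x q W hW0 hqW hcharx
  have cs2 := count_shift (fun k => Uprime al k) yy 0 W hW0 hW0 hchary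
  have hWq : (W - q).toNat + 1 = E := by omega
  rw [hWq] at cs1
  have hW1 : (W - 0).toNat + 1 = nW + 1 := by omega
  rw [hW1] at cs2
  simp only [neg_zero, Int.toNat_zero, Finset.range_zero, Finset.filter_empty,
    Finset.card_empty, add_zero] at cs2
  -- names
  set X1 : ℕ := ((Finset.Icc (0:ℤ) W).filter (fun i => x i = 1)).card with hX1
  set Y1 : ℕ := ((Finset.Icc (0:ℤ) W).filter (fun i => yy i = 1)).card with hY1
  set cβ : ℕ := ((Finset.range ((-q).toNat)).filter (fun k => Uprime β k = true)).card with hcβ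
  have hcβle : cβ ≤ q.natAbs := by
    calc cβ ≤ (Finset.range ((-q).toNat)).card := Finset.card_filter_le _ _
      _ = (-q).toNat := Finset.card_range _
      _ ≤ q.natAbs := by omega
  -- cs1 : X1 + cβ = Cb β E ; cs2 : Y1 = Cb al (nW+1)
  have hcs1 : (X1:ℝ) + (cβ:ℝ) = (Cb β E : ℝ) := by exact_mod_cast congrArg (fun z : ℕ => (z:ℝ)) cs1
  have hcs2 : (Y1:ℝ) = (Cb al (nW+1) : ℝ) := by exact_mod_cast congrArg (fun z : ℕ => (z:ℝ)) cs2
  -- Cb al (nW+1) close to Cb al E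
  have hlip := Cb_lip al E (nW+1)
  have hnWE : |((nW+1 : ℕ):ℝ) - (E:ℝ)| = |(q:ℝ)| := by
    have : ((nW+1 : ℕ):ℤ) - (E:ℤ) = q := by omega
    have hr : ((nW+1 : ℕ):ℝ) - (E:ℝ) = (q:ℝ) := by exact_mod_cast congrArg (fun z : ℤ => (z:ℝ)) this
    rw [hr]
  rw [hnWE] at hlip
  have hqabs : |(q:ℝ)| = (q.natAbs:ℝ) := by rw [Nat.cast_natAbs, Int.cast_abs]
  rw [hqabs] at hlip
  -- Cb estimates
  have hest1 := Cb_est (le_of_lt al_pos) (le_of_lt al_lt_one) J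
  have hest2 := Cb_est hβ0 hβ1 J
  rw [← hEdef] at hest1 hest2
  set E' : ℝ := (2:ℝ)^(J+1) - 1 with hE'def
  have hEE' : ((E:ℕ):ℝ) = E' := by
    have h1 : (1:ℕ) ≤ 2^(J+1) := Nat.one_le_two_pow
    rw [hEdef]
    push_cast [Nat.cast_sub h1]
    ring
  have hE'2J : (2:ℝ)^J ≤ E' := by
    rw [hE'def]
    have h1 : (2:ℝ)^(J+1) = 2*2^J := by ring
    have h2 : (1:ℝ) ≤ 2^J := one_le_pow₀ (by norm_num)
    nlinarith
  have hE'pos : (0:ℝ) < E' := lt_of_lt_of_le (by positivity) hE'2J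
  -- |Y1 - Cb al E| ≤ q.natAbs
  have hY1close : |(Y1:ℝ) - (Cb al E : ℝ)| ≤ (q.natAbs:ℝ) := by
    rw [hcs2]; exact hlip
  have hX1close : |(X1:ℝ) - (Cb β E : ℝ)| ≤ (q.natAbs:ℝ) := by
    have : (X1:ℝ) - (Cb β E : ℝ) = -(cβ:ℝ) := by linarith [hcs1]
    rw [this, abs_neg, abs_of_nonneg (Nat.cast_nonneg _)]
    exact_mod_cast hcβle
  have hdelta : |(1-al)*E' - (1-β)*E'| = δ * E' := by
    rw [show (1-al)*E' - (1-β)*E' = (β - al)*E' by ring, abs_mul,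
      abs_of_pos hE'pos, hδdef, abs_sub_comm]
  have step1 : |(1-al)*E' - (1-β)*E'| - ((J:ℝ)+1) - ((J:ℝ)+1)
      ≤ |(Cb al E : ℝ) - (Cb β E : ℝ)| := by
    have := abs_ge_of_close (abs_sub_comm ((Cb al E : ℝ)) ((1-al)*E') ▸ hest1)
      (abs_sub_comm ((Cb β E : ℝ)) ((1-β)*E') ▸ hest2)
    -- careful orientation: use helper directly
    exact abs_ge_of_close hest1 hest2
  have step2 : |(Cb al E : ℝ) - (Cb β E : ℝ)| - (q.natAbs:ℝ) - (q.natAbs:ℝ)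
      ≤ |(Y1:ℝ) - (X1:ℝ)| := abs_ge_of_close hY1close hX1close
  have tle : δ*E' - 2*((J:ℝ)+1) - 2*(q.natAbs:ℝ) ≤ |(Y1:ℝ) - (X1:ℝ)| := by
    rw [hdelta] at step1
    linarith
  -- hamming lower bound
  set Dham : ℕ := ((Finset.Icc (0:ℤ) W).filter (fun i => x i ≠ yy i)).card with hDham
  have hd1 : X1 ≤ Y1 + Dham := ones_diff x yy _
  have hd2 : Y1 ≤ X1 + Dham := ones_diff' x yy _
  have hDle : Dham ≤ hamIcc x yy (-(nW:ℤ)) nW := by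
    rw [ham_eq]
    apply Finset.card_le_card
    apply Finset.filter_subset_filter
    apply Finset.Icc_subset_Icc (by omega) (by omega)
  have hamlow : |(Y1:ℝ) - (X1:ℝ)| ≤ (hamIcc x yy (-(nW:ℤ)) nW : ℝ) := by
    rw [abs_sub_le_iff]
    constructor
    · have : Y1 ≤ X1 + hamIcc x yy (-(nW:ℤ)) nW := le_trans hd2 (by omega)
      have := (Nat.cast_le (α := ℝ)).mpr this
      push_cast at this
      linarith
    · have : X1 ≤ Y1 + hamIcc x yy (-(nW:ℤ)) nW := le_trans hd1 (by omega)
      have := (Nat.cast_le (α := ℝ)).mpr this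
      push_cast at this
      linarith
  -- numeric conclusion
  have hqnE : (q.natAbs:ℝ) ≤ E' := by
    have h1 : q.natAbs ≤ 2^J := by omega
    have h2 : ((2^J : ℕ) : ℝ) ≤ E' := by
      have : ((2^J : ℕ) : ℝ) = (2:ℝ)^J := by push_cast; ring
      rw [this]; exact hE'2J
    calc (q.natAbs:ℝ) ≤ ((2^J : ℕ) : ℝ) := Nat.cast_le.mpr h1
      _ ≤ E' := h2
  have hnWr : (nW:ℝ) ≤ E' + (q.natAbs:ℝ) := by
    have h1 : (nW:ℤ) ≤ (E:ℤ) + q.natAbs := by omega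
    have h2 : ((nW:ℕ):ℝ) ≤ ((E:ℕ):ℝ) + ((q.natAbs:ℕ):ℝ) := by exact_mod_cast h1
    rw [hEE'] at h2
    exact h2
  have hJ2' : 2*((J:ℝ)+1) + 2*(q.natAbs:ℝ) ≤ (δ/2)*E' := by
    have h1 : (δ/4) * (2:ℝ)^J ≤ (δ/4)*E' := by
      apply mul_le_mul_of_nonneg_left hE'2J (by positivity)
    linarith
  have hamlow2 : (δ/2)*E' ≤ (hamIcc x yy (-(nW:ℤ)) nW : ℝ) := by
    have := le_trans (by linarith : (δ/2)*E' ≤ δ*E' - 2*((J:ℝ)+1) - 2*(q.natAbs:ℝ)) tle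
    linarith
  rw [le_div_iff₀ (by positivity)]
  have hden : 2*(nW:ℝ) + 1 ≤ 4*E' := by
    have := hE'2J
    have h2 : (1:ℝ) ≤ 2^J := one_le_pow₀ (by norm_num)
    linarith [hqnE, hnWr]
  nlinarith [hδ, hE'pos]

lemma dg_injective : Function.Injective dg := by
  intro a b h
  cases a <;> cases b <;> simp_all [dg]

set_option maxHeartbeats 1000000 in
lemma approx (ε : ℝ) (hε : 0 < ε) :
    ∃ z : ℤ → Fin 5, (∃ xw ∈ XX, dB xw z = 0) ∧ dB z yy < ε := by
  -- choose the rational approximation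
  obtain ⟨nn, hnn⟩ := exists_nat_gt (8/ε)
  have hnn1 : 1 ≤ nn := by
    by_contra hcon
    push_neg at hcon
    interval_cases nn
    · have h8 : (0:ℝ) < 8/ε := div_pos (by norm_num) hε
      simp at hnn
      linarith
  have hnnpos : (0:ℝ) < nn := by exact_mod_cast hnn1
  set mm : ℕ := (⌊al * nn⌋).toNat with hmm
  have hfl0 : (0:ℤ) ≤ ⌊al * nn⌋ :=
    Int.floor_nonneg.mpr (mul_nonneg (le_of_lt al_pos) (le_of_lt hnnpos))
  have hmmr : ((mm:ℕ):ℝ) = ((⌊al * nn⌋ : ℤ) : ℝ) := by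
    rw [hmm]
    exact_mod_cast congrArg (fun z : ℤ => (z:ℝ)) (Int.toNat_of_nonneg hfl0)
  set r : ℝ := (mm:ℝ)/(nn:ℝ) with hr
  have hr0 : 0 ≤ r := by positivity
  have hrle : r ≤ al := by
    rw [hr, div_le_iff₀ hnnpos, hmmr]
    exact Int.floor_le _
  have hrclose : al - r < 1/nn := by
    rw [hr, sub_lt_iff_lt_add]
    rw [div_add_div _ _ (by positivity) (by positivity), lt_div_iff₀ (by positivity)]
    have := Int.lt_floor_add_one (al * nn)
    rw [← hmmr] at this
    ring_nf
    nlinarith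
  have hrε : al - r < ε/8 := by
    have h8 : 1/(nn:ℝ) < ε/8 := by
      rw [div_lt_div_iff₀ hnnpos (by norm_num : (0:ℝ) < 8)]
      rw [div_lt_iff₀ hε] at hnn
      nlinarith
    linarith
  -- the approximating point
  set z : ℤ → Fin 5 := fun i => G mm nn (i + ((mm:ℤ) + nn)) with hz
  have hzXX : z ∈ XX := fun N => ⟨mm, nn, (mm:ℤ) + nn, fun i _ => rfl⟩
  refine ⟨z, ⟨z, hzXX, dB_self z⟩, ?_⟩
  -- eventual bound on window mismatch densities
  have hzi : ∀ i : ℤ, 0 ≤ i → z i = dg (Uprime r i.toNat) := by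
    intro i hi
    rw [hz]
    simp only
    rw [G_d mm nn (by omega)]
    congr 2
    omega
  have hzneg : ∀ i : ℤ, i < -((mm:ℤ) + nn) → z i = 2 := by
    intro i hi
    rw [hz]
    simp only
    exact G_two mm nn (by omega)
  -- counting bound
  have hham : ∀ N : ℕ, hamIcc z yy (-(N:ℤ)) N ≤ (mm + nn) + Db al r (N+1) := by
    intro N
    rw [ham_eq]
    have hsub : (Finset.Icc (-(N:ℤ)) N).filter (fun i => z i ≠ yy i)
        ⊆ ((Finset.Icc (-((mm:ℤ)+nn)) (-1)).filter (fun i => z i ≠ yy i))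
          ∪ ((Finset.Icc (0:ℤ) N).filter (fun i => z i ≠ yy i)) := by
      intro i hi
      simp only [Finset.mem_filter, Finset.mem_Icc, Finset.mem_union] at hi ⊢
      obtain ⟨⟨h1, h2⟩, h3⟩ := hi
      rcases lt_or_ge i 0 with h4 | h4
      · left
        refine ⟨⟨?_, by omega⟩, h3⟩
        by_contra hcon
        push_neg at hcon
        exact h3 ((hzneg i (by omega)).trans (yy_neg h4).symm)
      · right
        exact ⟨⟨h4, h2⟩, h3⟩
    calc ((Finset.Icc (-(N:ℤ)) N).filter (fun i => z i ≠ yy i)).card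
        ≤ (((Finset.Icc (-((mm:ℤ)+nn)) (-1)).filter (fun i => z i ≠ yy i))
          ∪ ((Finset.Icc (0:ℤ) N).filter (fun i => z i ≠ yy i))).card :=
          Finset.card_le_card hsub
      _ ≤ ((Finset.Icc (-((mm:ℤ)+nn)) (-1)).filter (fun i => z i ≠ yy i)).card
          + ((Finset.Icc (0:ℤ) N).filter (fun i => z i ≠ yy i)).card :=
          Finset.card_union_le _ _
      _ ≤ (mm + nn) + Db al r (N+1) := by
          gcongr
          · calc ((Finset.Icc (-((mm:ℤ)+nn)) (-1)).filter (fun i => z i ≠ yy i)).card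
                ≤ (Finset.Icc (-((mm:ℤ)+nn)) (-1)).card := Finset.card_filter_le _ _
              _ = mm + nn := by rw [Int.card_Icc]; omega
          · -- map into the ℕ mismatch set
            apply Finset.card_le_card_of_injOn (fun i => i.toNat)
            · intro i hi
              simp only [Finset.mem_coe, Finset.mem_filter, Finset.mem_Icc] at hi
              obtain ⟨⟨h1, h2⟩, h3⟩ := hi
              simp only [Db, Finset.mem_coe, Finset.mem_filter, Finset.mem_range]
              constructor
              · omega
              · intro hcon
                apply h3
                rw [hzi i h1, yy_digit h1, hcon]
            · intro i hi j hj hij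
              simp only [Finset.coe_filter, Set.mem_setOf_eq, Finset.mem_Icc] at hi hj
              have hij' : i.toNat = j.toNat := hij
              have h1 : 0 ≤ i := hi.1.1
              have h2 : 0 ≤ j := hj.1.1
              omega
    done
  -- limsup estimate
  have hcob : IsCoboundedUnder (· ≤ ·) atTop
      (fun n : ℕ => (hamIcc z yy (-(n:ℤ)) n : ℝ)/(2*n+1)) := by
    apply Filter.IsBoundedUnder.isCoboundedUnder_flip
    apply Filter.isBoundedUnder_of
    exact ⟨0, fun n => by positivity⟩
  have hev : ∀ᶠ N : ℕ in atTop,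
      (hamIcc z yy (-(N:ℤ)) N : ℝ)/(2*N+1) ≤ ε/4 + ε/8 + ε/8 := by
    obtain ⟨J0, hJ0⟩ := eventually_atTop.mp
      (eventually_linear_le_two_pow ((mm:ℝ) + nn + 2) (ε/16) (by positivity))
    filter_upwards [eventually_ge_atTop (2^J0)] with N hN
    set L : ℕ := Nat.log 2 (N+1) with hLdef
    have hL1 : 2^L ≤ N+1 := Nat.pow_log_le_self 2 (by omega)
    have hLJ0 : J0 ≤ L := by
      have := Nat.log_mono_right (b := 2) (show 2^J0 ≤ N+1 by omega)
      rwa [Nat.log_pow (by norm_num : 1 < 2)] at this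
    have hkey := hJ0 L hLJ0
    have hNpos : (0:ℝ) < 2*(N:ℝ)+1 := by positivity
    rw [div_le_iff₀ hNpos]
    have hh := hham N
    have hh' : (hamIcc z yy (-(N:ℤ)) N : ℝ) ≤ ((mm:ℝ) + nn) + (Db al r (N+1) : ℝ) := by
      have := (Nat.cast_le (α := ℝ)).mpr hh
      push_cast at this
      linarith
    have hdb := Db_le_all (le_of_lt al_pos) hr0 (N+1) (by omega)
    rw [← hLdef] at hdb
    have habs : |al - r| = al - r := abs_of_nonneg (by linarith)
    rw [habs] at hdb
    -- |al - r|*(2*(N+1)) ≤ (ε/4)*(2N+1) + ε/4 ... careful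
    have hb1 : (al - r) * (2*((N:ℝ)+1)) ≤ (ε/8) * (2*((N:ℝ)+1)) := by
      apply mul_le_mul_of_nonneg_right (le_of_lt hrε) (by positivity)
    have hb2 : (ε/8) * (2*((N:ℝ)+1)) = (ε/4)*(N+1) := by ring
    have hb3 : (ε/4)*((N:ℝ)+1) ≤ (ε/4)*(2*N+1) := by
      apply mul_le_mul_of_nonneg_left _ (by positivity)
      have : (0:ℝ) ≤ N := Nat.cast_nonneg N
      linarith
    -- log term
    have h2L : ((2:ℕ)^L : ℝ) ≤ (N:ℝ)+1 := by exact_mod_cast hL1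
    have hlog : 2*((L:ℝ)+1) + ((mm:ℝ) + nn) ≤ (ε/8)*(2*(N:ℝ)+1) := by
      have hc1 : (L:ℝ) + ((mm:ℝ) + nn + 2) ≤ (ε/16)*2^L := hkey
      have hc2 : ((2:ℝ))^L ≤ (N:ℝ)+1 := by
        have : ((2:ℕ)^L : ℝ) = (2:ℝ)^L := by push_cast; ring
        rw [← this]; exact h2L
      have hc3 : (ε/16)*(2:ℝ)^L ≤ (ε/16)*((N:ℝ)+1) := by
        apply mul_le_mul_of_nonneg_left hc2 (by positivity)
      have hc4 : (ε/16)*((N:ℝ)+1) ≤ (ε/16)*(2*(N:ℝ)+1) := by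
        apply mul_le_mul_of_nonneg_left _ (by positivity)
        have : (0:ℝ) ≤ N := Nat.cast_nonneg N
        linarith
      have hL0 : (0:ℝ) ≤ L := Nat.cast_nonneg L
      nlinarith
    have hdbN : (Db al r (N+1) : ℝ) ≤ (al - r)*(2*((N:ℝ)+1)) + 2*((L:ℝ)+1) := by
      have : ((N+1 : ℕ) : ℝ) = (N:ℝ)+1 := by push_cast; ring
      rw [this] at hdb
      linarith
    calc (hamIcc z yy (-(N:ℤ)) N : ℝ)
        ≤ ((mm:ℝ) + nn) + (Db al r (N+1) : ℝ) := hh'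
      _ ≤ ((mm:ℝ) + nn) + (al - r)*(2*((N:ℝ)+1)) + 2*((L:ℝ)+1) := by linarith
      _ ≤ (ε/4)*(2*(N:ℝ)+1) + (ε/8)*(2*(N:ℝ)+1) := by nlinarith
      _ ≤ (ε/4 + ε/8 + ε/8) * (2*(N:ℝ)+1) := by nlinarith
  have hlimsup := Filter.limsup_le_of_le hcob hev
  rw [dB]
  calc Filter.limsup (fun n : ℕ => (hamIcc z yy (-(n:ℤ)) n : ℝ)/(2*n+1)) atTop
      ≤ ε/4 + ε/8 + ε/8 := hlimsup
    _ < ε := by linarith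

lemma left_contra {x : ℤ → Fin 5} (h : ∀ i : ℤ, i < 0 → x i ≠ 2)
    (h0 : dB x yy = 0) : False := by
  apply dB_zero_frequently_contra (show (0:ℝ) < 1/3 by norm_num) ?_ h0
  apply Filter.Eventually.frequently
  rw [eventually_atTop]
  refine ⟨1, fun n hn => ?_⟩
  have hsub : Finset.Icc (-(n:ℤ)) (-1) ⊆
      (Finset.Icc (-(n:ℤ)) n).filter (fun i => x i ≠ yy i) := by
    intro i hi
    simp only [Finset.mem_Icc] at hi
    obtain ⟨h1, h2⟩ := hi
    simp only [Finset.mem_filter, Finset.mem_Icc]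
    refine ⟨⟨h1, by omega⟩, ?_⟩
    rw [yy_neg (by omega)]
    exact h i (by omega)
  have hcard : n ≤ hamIcc x yy (-(n:ℤ)) n := by
    rw [ham_eq]
    calc n = (Finset.Icc (-(n:ℤ)) (-1)).card := by rw [Int.card_Icc]; omega
      _ ≤ _ := Finset.card_le_card hsub
  rw [le_div_iff₀ (by positivity)]
  have : (n:ℝ) ≤ (hamIcc x yy (-(n:ℤ)) n : ℝ) := Nat.cast_le.mpr hcard
  have hn1 : (1:ℝ) ≤ n := by exact_mod_cast hn
  linarith

lemma not_close (x : ℤ → Fin 5) (hx : x ∈ XX) (h0 : dB x yy = 0) : False := by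
  classical
  by_cases hA : ∃ i : ℤ, x i = 2
  · obtain ⟨i1, hi1⟩ := hA
    by_cases hB : ∀ i : ℤ, x i = 2
    · exact tail_contra 0 (fun i _ => Or.inl (hB i)) h0
    · push_neg at hB
      obtain ⟨i0, hi0⟩ := hB
      have hi10 : i1 < i0 := by
        by_contra hcon
        push_neg at hcon
        exact hi0 (downset hx hcon hi1)
      have hPex : ∃ k : ℕ, x (i1 + 1 + (k:ℤ)) ≠ 2 :=
        ⟨(i0 - i1 - 1).toNat, by
          rw [show i1 + 1 + (((i0 - i1 - 1).toNat : ℕ):ℤ) = i0 by omega]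
          exact hi0⟩
      set kp : ℕ := Nat.find hPex with hkp
      set p : ℤ := i1 + 1 + (kp:ℤ) with hp
      have hpne : x p ≠ 2 := Nat.find_spec hPex
      have hplt : ∀ i : ℤ, i < p → x i = 2 := by
        intro i hi
        rcases le_or_gt i i1 with h1 | h1
        · exact downset hx h1 hi1
        · have hk : (((i - i1 - 1).toNat : ℕ):ℤ) = i - i1 - 1 := Int.toNat_of_nonneg (by omega)
          have hlt : (i - i1 - 1).toNat < kp := by omega
          have := Nat.find_min hPex hlt
          rw [not_not] at this
          rw [show i1 + 1 + (((i - i1 - 1).toNat : ℕ):ℤ) = i by omega] at this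
          exact this
      have hup : ∀ i : ℤ, p ≤ i → x i ≠ 2 := fun i hi hcon => hpne (downset hx hi hcon)
      by_cases hBall : ∀ k : ℕ, x (p + (k:ℤ)) = 3
      · apply tail_contra p ?_ h0
        intro i hi
        right; left
        have := hBall (i - p).toNat
        rw [show p + (((i - p).toNat : ℕ):ℤ) = i by omega] at this
        exact this
      · push_neg at hBall
        set m : ℕ := Nat.find hBall with hm
        have hmb : x (p + (m:ℤ)) ≠ 3 := Nat.find_spec hBall
        have hbrun : ∀ k : ℕ, k < m → x (p + (k:ℤ)) = 3 := by
          intro k hk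
          have := Nat.find_min hBall hk
          rwa [not_not] at this
        by_cases hCall : ∀ k : ℕ, x (p + (m:ℤ) + (k:ℤ)) = 4
        · apply tail_contra (p + (m:ℤ)) ?_ h0
          intro i hi
          right; right
          have := hCall (i - p - m).toNat
          rw [show p + (m:ℤ) + (((i - p - m).toNat : ℕ):ℤ) = i by omega] at this
          exact this
        · push_neg at hCall
          set n : ℕ := Nat.find hCall with hn
          have hnc : x (p + (m:ℤ) + (n:ℤ)) ≠ 4 := Nat.find_spec hCall
          have hcrun : ∀ k : ℕ, k < n → x (p + (m:ℤ) + (k:ℤ)) = 4 := by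
            intro k hk
            have := Nat.find_min hCall hk
            rwa [not_not] at this
          have hpa : x (p - 1) = 2 := hplt (p-1) (by omega)
          have hforce := forcing hx hpa hpne hbrun hmb hcrun hnc
          exact digit_contra hplt hbrun hcrun hforce h0
  · push_neg at hA
    exact left_contra (fun i _ => hA i) h0


/-- there is a subshift (over a suitable finite alphabet) whose
Besicovitch projection `X̃` is not `dB`-closed: some `y` satisfies
`d_B(y, X̃) = 0` but `y ∉ X̃`. -/
theorem exists_subshift_tilde_not_closed :
    ∃ (n : ℕ) (X : Set (ℤ → Fin n)), IsSubshift X ∧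
      ∃ y : ℤ → Fin n,
        (∀ ε > (0 : ℝ), ∃ z : ℤ → Fin n, (∃ x ∈ X, dB x z = 0) ∧ dB z y < ε) ∧
        ¬ ∃ x ∈ X, dB x y = 0 := by
  refine ⟨5, XX, XX_subshift, yy, ?_, ?_⟩
  · intro ε hε
    obtain ⟨z, hz1, hz2⟩ := approx ε hε
    exact ⟨z, hz1, hz2⟩
  · rintro ⟨x, hx, h0⟩
    exact not_close x hx h0
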